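/- For any solution of the PI-controlled system, the function W(ω(t), χ(t)) = ½ M ω(t)² + ½ β(χ(t) − χ̄)² is nonincreasing in t, and consequently every solution is bounded. -/

import Mathlib

/-- W(ω(t), χ(t)) is nonincreasing along solutions, hence every solution is bounded. -/
theorem stmt18 (M D β γ : ℝ) (hM : 0 < M) (hD : 0 < D) (hβ : 0 < β) (hγ : 0 < γ)
    (nL : ℕ) (ubar : ℝ) (δL : Fin nL → ℝ)
    (χbar : ℝ) (hχbar : χbar = (ubar - ∑ i, δL i) / β)
    (ω χ : ℝ → ℝ)
    (hω : ∀ t ≥ (0 : ℝ), HasDerivAt ω ((-(D + γ) * ω t - β * χ t + (ubar - ∑ i, δL i)) / M) t)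
    (hχ : ∀ t ≥ (0 : ℝ), HasDerivAt χ (ω t) t) :
    (∀ s t : ℝ, 0 ≤ s → s ≤ t →
      (1 / 2) * M * (ω t) ^ 2 + (1 / 2) * β * (χ t - χbar) ^ 2 ≤
      (1 / 2) * M * (ω s) ^ 2 + (1 / 2) * β * (χ s - χbar) ^ 2) ∧
    (∃ R : ℝ, ∀ t ≥ (0 : ℝ), ‖(ω t, χ t)‖ ≤ R) := by
  have hβχ : β * χbar = ubar - ∑ i, δL i := by
    rw [hχbar]; field_simp
  set W : ℝ → ℝ := fun t => (1 / 2) * M * (ω t) ^ 2 + (1 / 2) * β * (χ t - χbar) ^ 2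
    with hWdef
  have hW : ∀ t ≥ (0 : ℝ), HasDerivAt W (-(D + γ) * (ω t) ^ 2) t := by
    intro t ht
    have h1 := ((hω t ht).pow 2).const_mul ((1 : ℝ) / 2 * M)
    have h2 := (((hχ t ht).sub_const χbar).pow 2).const_mul ((1 : ℝ) / 2 * β)
    have h := h1.add h2
    convert h using 1
    case e'_4 => rfl
    case e'_5 => rfl
    case e'_8 => rfl
    push_cast
    rw [← hβχ]
    field_simp
    ring
  have hmono : AntitoneOn W (Set.Ici (0 : ℝ)) := by
    apply antitoneOn_of_deriv_nonpos (convex_Ici 0)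
    · intro t ht
      exact (hW t ht).continuousAt.continuousWithinAt
    · intro t ht
      rw [interior_Ici] at ht
      exact (hW t (le_of_lt ht)).differentiableAt.differentiableWithinAt
    · intro t ht
      rw [interior_Ici] at ht
      rw [(hW t (le_of_lt ht)).deriv]
      have : 0 < D + γ := by linarith
      nlinarith [sq_nonneg (ω t)]
  constructor
  · intro s t hs hst
    exact hmono hs (le_trans hs hst) hst
  · -- boundedness
    set W0 := W 0
    have hW0 : ∀ t ≥ (0 : ℝ), W t ≤ W0 := fun t ht =>
      hmono Set.self_mem_Ici ht ht
    have hW0nn : 0 ≤ W0 := by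
      have := sq_nonneg (ω 0); have := sq_nonneg (χ 0 - χbar)
      simp only [hWdef, W0]
      nlinarith
    clear_value W0
    refine ⟨Real.sqrt (2 * W0 / M) + (Real.sqrt (2 * W0 / β) + |χbar|), fun t ht => ?_⟩
    have hWt := hW0 t ht
    simp only [hWdef] at hWt
    have hωb : |ω t| ≤ Real.sqrt (2 * W0 / M) := by
      rw [← Real.sqrt_sq_eq_abs]
      apply Real.sqrt_le_sqrt
      rw [le_div_iff₀ hM]
      nlinarith [mul_nonneg hβ.le (sq_nonneg (χ t - χbar))]
    have hχb : |χ t| ≤ Real.sqrt (2 * W0 / β) + |χbar| := by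
      have h1 : |χ t - χbar| ≤ Real.sqrt (2 * W0 / β) := by
        rw [← Real.sqrt_sq_eq_abs]
        apply Real.sqrt_le_sqrt
        rw [le_div_iff₀ hβ]
        nlinarith [mul_nonneg hM.le (sq_nonneg (ω t))]
      calc |χ t| = |(χ t - χbar) + χbar| := by ring_nf
        _ ≤ |χ t - χbar| + |χbar| := abs_add_le _ _
        _ ≤ _ := by linarith
    have hnorm : ‖(ω t, χ t)‖ ≤ |ω t| + |χ t| := by
      rw [Prod.norm_def]
      simp only [Real.norm_eq_abs]
      have := abs_nonneg (ω t); have := abs_nonneg (χ t)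
      exact max_le (by linarith) (by linarith)
    calc ‖(ω t, χ t)‖ ≤ |ω t| + |χ t| := hnorm
      _ ≤ _ := by linarith
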